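/- For every prime q, let G be the complete layered graph on n = q^2 vertices consisting of q layers of q vertices each, where a vertex in layer L is adjacent exactly to all vertices of layers L−1 and L+1. Then for every pair set P whose pairs each consist of a vertex of layer 1 and a vertex of layer q, there exists a consistent path tiebreaking scheme ρ_G on G such that the paths {ρ_G(p) : p ∈ P} are pairwise edge-disjoint; consequently the union ∪_{p∈P} ρ_G(p) contains exactly |P|·(q−1) = n^{1/2}·|P| − |P| edges. In particular, for any 1/2 ≤ c ≤ 1, taking |P| = ⌊n^c⌋ such pairs yields a consistent scheme whose union of paths has Θ(n^{1/2}|P|) edges. -/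

import Mathlib

set_option linter.unusedSectionVars false
set_option maxHeartbeats 1000000
open SimpleGraph

/-- The complete layered graph with `t` layers of `q` vertices each: a vertex in layer `L`
is adjacent exactly to all vertices of layers `L - 1` and `L + 1`. -/
def layeredGraph (t q : ℕ) : SimpleGraph (Fin t × Fin q) where
  Adj u v := u.1.val + 1 = v.1.val ∨ v.1.val + 1 = u.1.val
  symm := ⟨by intro u v h; tauto⟩
  loopless := ⟨by intro u h; rcases h with h | h <;> omega⟩

/-- Every `ρ u v` is a shortest path from `u` to `v`. -/
def IsShortestPathScheme {V : Type*} {G : SimpleGraph V}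
    (ρ : ∀ u v : V, G.Walk u v) : Prop :=
  ∀ u v : V, (ρ u v).IsPath ∧ (ρ u v).length = G.dist u v

/-- A path tiebreaking scheme is consistent if whenever `w` and `x` both lie on `ρ u v`
(with `x` not before `w`), the path `ρ w x` equals the subpath of `ρ u v` between `w`
and `x`. -/
def IsConsistentScheme {V : Type*} [DecidableEq V] {G : SimpleGraph V}
    (ρ : ∀ u v : V, G.Walk u v) : Prop :=
  ∀ (u v w : V) (hw : w ∈ (ρ u v).support) (x : V)
    (hx : x ∈ ((ρ u v).dropUntil w hw).support),
    ρ w x = ((ρ u v).dropUntil w hw).takeUntil x hx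

namespace ConsLB
variable {V : Type*} {G : SimpleGraph V}

def mkWalk (G : SimpleGraph V) (c : ℕ → V) :
    (n : ℕ) → (∀ i, i < n → G.Adj (c i) (c (i+1))) → G.Walk (c 0) (c n)
  | 0, _ => .nil
  | n+1, h => Walk.cons (h 0 (Nat.succ_pos n))
      (mkWalk G (fun i => c (i+1)) n (fun i hi => h (i+1) (by omega)))

lemma support_mkWalk (c : ℕ → V) : ∀ (n : ℕ) (h),
    (mkWalk G c n h).support = (List.range (n+1)).map c := by
  intro n
  induction n generalizing c with
  | zero => intro h; simp [mkWalk, List.range_succ]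
  | succ n ih =>
    intro h
    rw [mkWalk, Walk.support_cons, ih]
    rw [List.range_succ_eq_map (n := n+1)]
    simp [List.map_map, Function.comp_def]

lemma length_mkWalk (c : ℕ → V) : ∀ (n : ℕ) (h), (mkWalk G c n h).length = n := by
  intro n; induction n generalizing c with
  | zero => intro h; rfl
  | succ n ih => intro h; rw [mkWalk, Walk.length_cons, ih]

lemma edges_mkWalk (c : ℕ → V) : ∀ (n : ℕ) (h),
    (mkWalk G c n h).edges = (List.range n).map (fun i => s(c i, c (i+1))) := by
  intro n; induction n generalizing c with
  | zero => intro h; rfl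
  | succ n ih =>
    intro h
    rw [mkWalk, Walk.edges_cons, ih, List.range_succ_eq_map]
    simp [List.map_map, Function.comp_def]

lemma eq_of_support_eq : ∀ {u v : V} (p p' : G.Walk u v), p.support = p'.support → p = p'
  | _, _, .nil, .nil, _ => rfl
  | _, _, .nil, .cons h' q', hs => by
      exfalso
      have := q'.support_ne_nil
      simp only [Walk.support_nil, Walk.support_cons, List.cons.injEq] at hs
      exact this hs.2.symm
  | _, _, .cons h p, .nil, hs => by
      exfalso
      have := p.support_ne_nil
      simp only [Walk.support_nil, Walk.support_cons, List.cons.injEq] at hs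
      exact this hs.2
  | _, _, .cons (v := w) h p, .cons (v := w') h' q', hs => by
      simp only [Walk.support_cons, List.cons.injEq] at hs
      have hw : w = w' := by
        have h1 := p.support_eq_cons
        have h2 := q'.support_eq_cons
        rw [h1, h2] at hs
        exact (List.cons.injEq _ _ _ _ ▸ hs.2).1
      subst hw
      rw [eq_of_support_eq p q' hs.2]

section DecEq
variable [DecidableEq V]

lemma takeUntil_start {u v : V} (p : G.Walk u v) (h : u ∈ p.support) :
    p.takeUntil u h = Walk.nil := by
  cases p with
  | nil => rfl
  | cons r p => simp only [Walk.takeUntil, dif_pos rfl]; simp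

lemma dropUntil_start {u v : V} (p : G.Walk u v) (h : u ∈ p.support) :
    p.dropUntil u h = p := by
  cases p with
  | nil => rfl
  | cons r p => simp only [Walk.dropUntil, dif_pos rfl]; simp

lemma takeUntil_cons_of_ne {u v w x : V} (r : G.Adj u v) (p : G.Walk v w) (hne : u ≠ x)
    (hx : x ∈ p.support) (hm : x ∈ (Walk.cons r p).support) :
    (Walk.cons r p).takeUntil x hm = Walk.cons r (p.takeUntil x hx) := by
  simp only [Walk.takeUntil, dif_neg hne]

lemma dropUntil_cons_of_ne {u v w x : V} (r : G.Adj u v) (p : G.Walk v w) (hne : u ≠ x)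
    (hx : x ∈ p.support) (hm : x ∈ (Walk.cons r p).support) :
    (Walk.cons r p).dropUntil x hm = p.dropUntil x hx := by
  simp only [Walk.dropUntil, dif_neg hne]

lemma mem_support_mkWalk {c : ℕ → V} {n : ℕ} {h} {w : V} :
    w ∈ (mkWalk G c n h).support ↔ ∃ j, j ≤ n ∧ c j = w := by
  rw [support_mkWalk]
  simp only [List.mem_map, List.mem_range, Nat.lt_succ_iff]

lemma support_dropUntil_mkWalk (c : ℕ → V) :
    ∀ (n : ℕ) (h) (j : ℕ), j ≤ n →
      (∀ a, a ≤ n → ∀ b, b ≤ n → c a = c b → a = b) → ∀ (hm),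
    ((mkWalk G c n h).dropUntil (c j) hm).support
      = (List.range (n-j+1)).map (fun i => c (j+i)) := by
  intro n h j
  induction j generalizing c n with
  | zero =>
    intro hj hinj hm
    rw [dropUntil_start, support_mkWalk]
    simp only [Nat.sub_zero, Nat.zero_add]
  | succ j ih =>
    intro hj hinj hm
    cases n with
    | zero => omega
    | succ m =>
      have hne : c 0 ≠ c (j+1) := fun hcc => by
        have := hinj 0 (by omega) (j+1) (by omega) hcc; omega
      have hx' : c (j+1) ∈ (mkWalk G (fun i => c (i+1)) m (fun i hi => h (i+1) (by omega))).support := by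
        rw [mem_support_mkWalk]; exact ⟨j, by omega, rfl⟩
      show ((Walk.cons (h 0 (Nat.succ_pos m))
          (mkWalk G (fun i => c (i+1)) m (fun i hi => h (i+1) (by omega)))).dropUntil
            (c (j+1)) hm).support = _
      rw [dropUntil_cons_of_ne _ _ hne hx' hm]
      rw [ih (fun i => c (i+1)) m (fun i hi => h (i+1) (by omega)) (by omega)
        (fun a ha b hb hab => by have := hinj (a+1) (by omega) (b+1) (by omega) hab; omega) hx']
      have h1 : m + 1 - (j+1) = m - j := by omega
      rw [h1]
      apply List.map_congr_left
      intro a _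
      congr 1
      omega

lemma support_takeUntil_mkWalk (c : ℕ → V) :
    ∀ (n : ℕ) (h) (j : ℕ), j ≤ n →
      (∀ a, a ≤ n → ∀ b, b ≤ n → c a = c b → a = b) → ∀ (hm : c j ∈ (mkWalk G c n h).support),
    ((mkWalk G c n h).takeUntil (c j) hm).support = (List.range (j+1)).map c := by
  intro n h j
  induction j generalizing c n with
  | zero =>
    intro hj hinj hm
    rw [takeUntil_start]
    simp [List.range_succ]
  | succ j ih =>
    intro hj hinj hm
    cases n with
    | zero => omega
    | succ m =>
      have hne : c 0 ≠ c (j+1) := fun hcc => by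
        have := hinj 0 (by omega) (j+1) (by omega) hcc; omega
      have hx' : c (j+1) ∈ (mkWalk G (fun i => c (i+1)) m (fun i hi => h (i+1) (by omega))).support := by
        rw [mem_support_mkWalk]; exact ⟨j, by omega, rfl⟩
      show ((Walk.cons (h 0 (Nat.succ_pos m))
          (mkWalk G (fun i => c (i+1)) m (fun i hi => h (i+1) (by omega)))).takeUntil
            (c (j+1)) hm).support = _
      rw [takeUntil_cons_of_ne _ _ hne hx' hm]
      rw [Walk.support_cons]
      rw [ih (fun i => c (i+1)) m (fun i hi => h (i+1) (by omega)) (by omega)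
        (fun a ha b hb hab => by have := hinj (a+1) (by omega) (b+1) (by omega) hab; omega) hx']
      rw [List.range_succ_eq_map (n := j+1)]
      simp [List.map_map, Function.comp_def]

lemma dropUntil_mkWalk_eq (c : ℕ → V) (n : ℕ) (h) (j : ℕ) (hj : j ≤ n)
    (hinj : ∀ a, a ≤ n → ∀ b, b ≤ n → c a = c b → a = b) (hm) :
    (mkWalk G c n h).dropUntil (c j) hm
      = (mkWalk G (fun i => c (j+i)) (n-j) (fun i hi => h (j+i) (by omega))).copy rfl
          (congrArg c (by omega)) := by
  apply eq_of_support_eq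
  rw [Walk.support_copy, support_dropUntil_mkWalk c n h j hj hinj, support_mkWalk]

end DecEq
section Graph
variable {q : ℕ}

abbrev Vtx (q : ℕ) := Fin q × Fin q

lemma lg_adj {t q : ℕ} {x y : Fin t × Fin q} :
    (layeredGraph t q).Adj x y ↔ (x.1.val + 1 = y.1.val ∨ y.1.val + 1 = x.1.val) := Iff.rfl

def fK (q : ℕ) [NeZero q] (x : ZMod q) : Fin q := ⟨x.val, ZMod.val_lt x⟩
def gK (q : ℕ) (a : Fin q) : ZMod q := (a.val : ZMod q)

lemma fK_gK [NeZero q] (a : Fin q) : fK q (gK q a) = a := by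
  apply Fin.ext
  simp [fK, gK, ZMod.val_natCast, Nat.mod_eq_of_lt a.isLt]

lemma gK_fK [NeZero q] (x : ZMod q) : gK q (fK q x) = x := ZMod.natCast_zmod_val x

lemma fK_inj [NeZero q] {x y : ZMod q} (h : fK q x = fK q y) : x = y := by
  have h2 := congrArg Fin.val h
  simp only [fK] at h2
  rw [← ZMod.natCast_zmod_val x, ← ZMod.natCast_zmod_val y, h2]

lemma gK_inj [NeZero q] {a b : Fin q} (h : gK q a = gK q b) : a = b := by
  have h2 := congrArg (fK q) h
  rwa [fK_gK, fK_gK] at h2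

def cUp [NeZero q] (u : Vtx q) (s : ZMod q) (i : ℕ) : Vtx q :=
  (⟨min (u.1.val + i) (q-1), by have := Nat.pos_of_ne_zero (NeZero.ne q); omega⟩,
   fK q (gK q u.2 + (i : ZMod q) * s))

def cDown [NeZero q] (u : Vtx q) (s : ZMod q) (i : ℕ) : Vtx q :=
  (⟨u.1.val - i, by have := u.1.isLt; omega⟩, fK q (gK q u.2 + (i : ZMod q) * s))

def midV (u : Vtx q) : Vtx q :=
  (if h : u.1.val + 1 < q then ⟨u.1.val + 1, h⟩
   else ⟨u.1.val - 1, by have := u.1.isLt; omega⟩, u.2)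

def cEq (u v : Vtx q) (i : ℕ) : Vtx q := if i = 0 then u else if i = 1 then midV u else v

def slp (q : ℕ) [NeZero q] (a b : Fin q) (d : ℕ) : ZMod q :=
  (gK q b - gK q a) * ((d : ZMod q))⁻¹

lemma adjUp [NeZero q] {u v : Vtx q} (hlt : u.1.val < v.1.val) (s : ZMod q) :
    ∀ i, i < v.1.val - u.1.val → (layeredGraph q q).Adj (cUp u s i) (cUp u s (i+1)) := by
  intro i hi
  have hv := v.1.isLt
  rw [lg_adj]
  simp only [cUp]
  omega

lemma adjDown [NeZero q] {u v : Vtx q} (hgt : v.1.val < u.1.val) (s : ZMod q) :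
    ∀ i, i < u.1.val - v.1.val → (layeredGraph q q).Adj (cDown u s i) (cDown u s (i+1)) := by
  intro i hi
  rw [lg_adj]
  simp only [cDown]
  omega

lemma adjEq {u v : Vtx q} (hq1 : 1 < q) (hl : v.1.val = u.1.val) :
    ∀ i, i < 2 → (layeredGraph q q).Adj (cEq u v i) (cEq u v (i+1)) := by
  intro i hi
  have hu := u.1.isLt
  rw [lg_adj]
  interval_cases i
  · rw [show cEq u v 0 = u from rfl, show cEq u v 1 = midV u from rfl]
    unfold midV
    split_ifs with h
    · exact Or.inl rfl
    · refine Or.inr ?_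
      show (u.1.val - 1) + 1 = u.1.val
      omega
  · rw [show cEq u v 1 = midV u from rfl, show cEq u v 2 = v from rfl]
    unfold midV
    split_ifs with h
    · refine Or.inr ?_
      show v.1.val + 1 = u.1.val + 1
      omega
    · refine Or.inl ?_
      show (u.1.val - 1) + 1 = v.1.val
      omega

lemma cUp_zero [NeZero q] (u : Vtx q) (s : ZMod q) : cUp u s 0 = u := by
  have := u.1.isLt
  refine Prod.ext ?_ ?_
  · apply Fin.ext; simp only [cUp]; omega
  · simp [cUp, fK_gK]

lemma cDown_zero [NeZero q] (u : Vtx q) (s : ZMod q) : cDown u s 0 = u := by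
  refine Prod.ext ?_ ?_
  · apply Fin.ext; simp [cDown]
  · simp [cDown, fK_gK]

lemma natCast_ne_zero_of [NeZero q] {d : ℕ} (h1 : 0 < d) (h2 : d < q) :
    ((d : ℕ) : ZMod q) ≠ 0 := by
  rw [Ne, ZMod.natCast_eq_zero_iff]
  intro hdvd
  have := Nat.le_of_dvd h1 hdvd
  omega

lemma cUp_last [Fact q.Prime] {u v : Vtx q} (hlt : u.1.val < v.1.val) :
    cUp u (slp q u.2 v.2 (v.1.val - u.1.val)) (v.1.val - u.1.val) = v := by
  have hv := v.1.isLt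
  have hd0 := natCast_ne_zero_of (q := q) (d := v.1.val - u.1.val) (by omega) (by omega)
  refine Prod.ext ?_ ?_
  · apply Fin.ext; simp only [cUp]; omega
  · show fK q (gK q u.2 + _ * slp q u.2 v.2 _) = v.2
    have h2 : gK q u.2 + ((v.1.val - u.1.val : ℕ) : ZMod q) * slp q u.2 v.2 (v.1.val - u.1.val)
        = gK q v.2 := by
      rw [slp]; field_simp; ring
    rw [h2, fK_gK]

lemma cDown_last [Fact q.Prime] {u v : Vtx q} (hgt : v.1.val < u.1.val) :
    cDown u (slp q u.2 v.2 (u.1.val - v.1.val)) (u.1.val - v.1.val) = v := by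
  have hu := u.1.isLt
  have hd0 := natCast_ne_zero_of (q := q) (d := u.1.val - v.1.val) (by omega) (by omega)
  refine Prod.ext ?_ ?_
  · apply Fin.ext; simp only [cDown]; omega
  · show fK q (gK q u.2 + _ * slp q u.2 v.2 _) = v.2
    have h2 : gK q u.2 + ((u.1.val - v.1.val : ℕ) : ZMod q) * slp q u.2 v.2 (u.1.val - v.1.val)
        = gK q v.2 := by
      rw [slp]; field_simp; ring
    rw [h2, fK_gK]

lemma cEq_zero (u v : Vtx q) : cEq u v 0 = u := rfl
lemma cEq_two (u v : Vtx q) : cEq u v 2 = v := rfl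

end Graph
section Rho
variable {q : ℕ}

def rho (hq : q.Prime) (u v : Vtx q) : (layeredGraph q q).Walk u v :=
  haveI : NeZero q := ⟨hq.pos.ne'⟩
  haveI : Fact q.Prime := ⟨hq⟩
  if huv : u = v then Walk.nil.copy rfl huv
  else if hlt : u.1.val < v.1.val then
    (mkWalk _ (cUp u (slp q u.2 v.2 (v.1.val - u.1.val))) (v.1.val - u.1.val)
      (adjUp hlt _)).copy (cUp_zero u _) (cUp_last hlt)
  else if hgt : v.1.val < u.1.val then
    (mkWalk _ (cDown u (slp q u.2 v.2 (u.1.val - v.1.val))) (u.1.val - v.1.val)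
      (adjDown hgt _)).copy (cDown_zero u _) (cDown_last hgt)
  else
    (mkWalk _ (cEq u v) 2 (adjEq hq.one_lt (by omega))).copy (cEq_zero u v) (cEq_two u v)

lemma support_rho_refl (hq : q.Prime) (u : Vtx q) : (rho hq u u).support = [u] := by
  rw [rho, dif_pos rfl]
  simp

lemma support_rho_lt [NeZero q] (hq : q.Prime) {u v : Vtx q} (hlt : u.1.val < v.1.val) :
    (rho hq u v).support
      = (List.range (v.1.val - u.1.val + 1)).map (cUp u (slp q u.2 v.2 (v.1.val - u.1.val))) := by
  have huv : u ≠ v := fun h => by subst h; omega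
  rw [rho, dif_neg huv, dif_pos hlt, Walk.support_copy, support_mkWalk]

lemma support_rho_gt [NeZero q] (hq : q.Prime) {u v : Vtx q} (hgt : v.1.val < u.1.val) :
    (rho hq u v).support
      = (List.range (u.1.val - v.1.val + 1)).map (cDown u (slp q u.2 v.2 (u.1.val - v.1.val))) := by
  have huv : u ≠ v := fun h => by subst h; omega
  have hnlt : ¬ u.1.val < v.1.val := by omega
  rw [rho, dif_neg huv, dif_neg hnlt, dif_pos hgt, Walk.support_copy, support_mkWalk]

lemma support_rho_eqlayer (hq : q.Prime) {u v : Vtx q} (huv : u ≠ v)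
    (hl : v.1.val = u.1.val) :
    (rho hq u v).support = (List.range 3).map (cEq u v) := by
  have hnlt : ¬ u.1.val < v.1.val := by omega
  have hngt : ¬ v.1.val < u.1.val := by omega
  rw [rho, dif_neg huv, dif_neg hnlt, dif_neg hngt, Walk.support_copy, support_mkWalk]

lemma length_rho_refl (hq : q.Prime) (u : Vtx q) : (rho hq u u).length = 0 := by
  rw [rho, dif_pos rfl]; simp

lemma length_rho_lt [NeZero q] (hq : q.Prime) {u v : Vtx q} (hlt : u.1.val < v.1.val) :
    (rho hq u v).length = v.1.val - u.1.val := by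
  have huv : u ≠ v := fun h => by subst h; omega
  rw [rho, dif_neg huv, dif_pos hlt, Walk.length_copy, length_mkWalk]

lemma length_rho_gt [NeZero q] (hq : q.Prime) {u v : Vtx q} (hgt : v.1.val < u.1.val) :
    (rho hq u v).length = u.1.val - v.1.val := by
  have huv : u ≠ v := fun h => by subst h; omega
  have hnlt : ¬ u.1.val < v.1.val := by omega
  rw [rho, dif_neg huv, dif_neg hnlt, dif_pos hgt, Walk.length_copy, length_mkWalk]

lemma length_rho_eqlayer (hq : q.Prime) {u v : Vtx q} (huv : u ≠ v)
    (hl : v.1.val = u.1.val) : (rho hq u v).length = 2 := by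
  have hnlt : ¬ u.1.val < v.1.val := by omega
  have hngt : ¬ v.1.val < u.1.val := by omega
  rw [rho, dif_neg huv, dif_neg hnlt, dif_neg hngt, Walk.length_copy, length_mkWalk]

lemma cUp_inj [NeZero q] (u : Vtx q) (s : ZMod q) (d : ℕ) (hd : u.1.val + d < q) :
    ∀ a, a ≤ d → ∀ b, b ≤ d → cUp u s a = cUp u s b → a = b := by
  intro a ha b hb hab
  have h2 := congrArg (fun z : Vtx q => z.1.val) hab
  simp only [cUp] at h2
  omega

lemma cDown_inj [NeZero q] (u : Vtx q) (s : ZMod q) (d : ℕ) (hd : d ≤ u.1.val) :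
    ∀ a, a ≤ d → ∀ b, b ≤ d → cDown u s a = cDown u s b → a = b := by
  intro a ha b hb hab
  have h2 := congrArg (fun z : Vtx q => z.1.val) hab
  simp only [cDown] at h2
  omega

lemma midV_layer_ne (hq1 : 1 < q) (u : Vtx q) : (midV u).1.val ≠ u.1.val := by
  have := u.1.isLt
  simp only [midV]
  split_ifs with h <;> simp <;> omega

lemma cEq_inj (hq1 : 1 < q) {u v : Vtx q} (huv : u ≠ v) (hl : v.1.val = u.1.val) :
    ∀ a, a ≤ 2 → ∀ b, b ≤ 2 → cEq u v a = cEq u v b → a = b := by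
  have hm := midV_layer_ne hq1 u
  intro a ha b hb hab
  have cEq_one : cEq u v 1 = midV u := rfl
  interval_cases a <;> interval_cases b <;>
    simp only [cEq_zero, cEq_one, cEq_two] at hab <;>
    first
    | rfl
    | exact absurd hab huv
    | exact absurd hab.symm huv
    | (rw [Prod.ext_iff] at hab
       have h3 := congrArg Fin.val hab.1
       omega)

lemma rho_isPath (hq : q.Prime) (u v : Vtx q) : (rho hq u v).IsPath := by
  haveI : NeZero q := ⟨hq.pos.ne'⟩
  rw [Walk.isPath_def]
  by_cases huv : u = v
  · subst huv; rw [support_rho_refl]; simp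
  · rcases lt_trichotomy u.1.val v.1.val with hlt | heq | hgt
    · rw [support_rho_lt hq hlt]
      refine List.Nodup.map_on ?_ List.nodup_range
      intro a ha b hb hab
      rw [List.mem_range] at ha hb
      exact cUp_inj u _ (v.1.val - u.1.val) (by have := v.1.isLt; omega) a (by omega) b (by omega) hab
    · rw [support_rho_eqlayer hq huv heq.symm]
      refine List.Nodup.map_on ?_ List.nodup_range
      intro a ha b hb hab
      rw [List.mem_range] at ha hb
      exact cEq_inj hq.one_lt huv heq.symm a (by omega) b (by omega) hab
    · rw [support_rho_gt hq hgt]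
      refine List.Nodup.map_on ?_ List.nodup_range
      intro a ha b hb hab
      rw [List.mem_range] at ha hb
      exact cDown_inj u _ (u.1.val - v.1.val) (by omega) a (by omega) b (by omega) hab

lemma layer_bound : ∀ {u v : Vtx q} (p : (layeredGraph q q).Walk u v),
    v.1.val ≤ u.1.val + p.length ∧ u.1.val ≤ v.1.val + p.length := by
  intro u v p
  induction p with
  | nil => simp
  | cons h p ih =>
    rw [lg_adj] at h
    rw [Walk.length_cons]
    omega

lemma rho_length_eq_dist (hq : q.Prime) (u v : Vtx q) :
    (rho hq u v).length = (layeredGraph q q).dist u v := by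
  haveI : NeZero q := ⟨hq.pos.ne'⟩
  have hreach : (layeredGraph q q).Reachable u v := ⟨rho hq u v⟩
  have hle := SimpleGraph.dist_le (rho hq u v)
  obtain ⟨p, hp⟩ := hreach.exists_walk_length_eq_dist
  have hbp := layer_bound p
  by_cases huv : u = v
  · subst huv; rw [length_rho_refl]
    simp [SimpleGraph.dist_self]
  · rcases lt_trichotomy u.1.val v.1.val with hlt | heq | hgt
    · rw [length_rho_lt hq hlt] at hle ⊢
      omega
    · rw [length_rho_eqlayer hq huv heq.symm] at hle ⊢
      have h0 : (layeredGraph q q).dist u v ≠ 0 := by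
        rw [Ne, hreach.dist_eq_zero_iff]
        exact huv
      have h1 : (layeredGraph q q).dist u v ≠ 1 := by
        intro hd
        have hadj := p.adj_of_length_eq_one (by omega)
        rw [lg_adj] at hadj
        omega
      omega
    · rw [length_rho_gt hq hgt] at hle ⊢
      omega

lemma gK_cUp [NeZero q] (u : Vtx q) (s : ZMod q) (i : ℕ) :
    gK q (cUp u s i).2 = gK q u.2 + (i : ZMod q) * s := by
  show gK q (fK q _) = _
  rw [gK_fK]

lemma gK_cDown [NeZero q] (u : Vtx q) (s : ZMod q) (i : ℕ) :
    gK q (cDown u s i).2 = gK q u.2 + (i : ZMod q) * s := by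
  show gK q (fK q _) = _
  rw [gK_fK]

lemma cUp_shift [NeZero q] (u : Vtx q) (s : ZMod q) (j i : ℕ) (hb : u.1.val + j ≤ q - 1) :
    cUp (cUp u s j) s i = cUp u s (j + i) := by
  refine Prod.ext ?_ ?_
  · apply Fin.ext; simp only [cUp]; omega
  · show fK q (gK q (cUp u s j).2 + (i : ZMod q) * s) = fK q (gK q u.2 + ((j+i : ℕ) : ZMod q) * s)
    rw [gK_cUp]
    congr 1
    push_cast
    ring

lemma cDown_shift [NeZero q] (u : Vtx q) (s : ZMod q) (j i : ℕ) :
    cDown (cDown u s j) s i = cDown u s (j + i) := by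
  refine Prod.ext ?_ ?_
  · apply Fin.ext; simp only [cDown]; omega
  · show fK q (gK q (cDown u s j).2 + (i : ZMod q) * s) = fK q (gK q u.2 + ((j+i : ℕ) : ZMod q) * s)
    rw [gK_cDown]
    congr 1
    push_cast
    ring

lemma slp_cUp [NeZero q] [Fact q.Prime] (u : Vtx q) (s : ZMod q) (j k : ℕ)
    (hk0 : 0 < k) (hkq : k < q) :
    slp q (cUp u s j).2 (cUp u s (j+k)).2 k = s := by
  have hk : ((k : ℕ) : ZMod q) ≠ 0 := natCast_ne_zero_of hk0 hkq
  rw [slp, gK_cUp, gK_cUp]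
  push_cast
  field_simp
  ring

lemma slp_cDown [NeZero q] [Fact q.Prime] (u : Vtx q) (s : ZMod q) (j k : ℕ)
    (hk0 : 0 < k) (hkq : k < q) :
    slp q (cDown u s j).2 (cDown u s (j+k)).2 k = s := by
  have hk : ((k : ℕ) : ZMod q) ≠ 0 := natCast_ne_zero_of hk0 hkq
  rw [slp, gK_cDown, gK_cDown]
  push_cast
  field_simp
  ring

lemma support_rho_adj [NeZero q] [Fact q.Prime] (hq : q.Prime) {w x : Vtx q}
    (h : w.1.val + 1 = x.1.val ∨ x.1.val + 1 = w.1.val) :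
    (rho hq w x).support = [w, x] := by
  have hx1 := x.1.isLt
  rcases h with h | h
  · have hlt : w.1.val < x.1.val := by omega
    rw [support_rho_lt hq hlt, show x.1.val - w.1.val = 1 from by omega]
    rw [show List.range 2 = [0, 1] from rfl]
    simp only [List.map_cons, List.map_nil]
    rw [cUp_zero]
    have e1 : cUp w (slp q w.2 x.2 1) 1 = x := by
      refine Prod.ext ?_ ?_
      · apply Fin.ext; simp only [cUp]; omega
      · show fK q (gK q w.2 + ((1:ℕ) : ZMod q) * slp q w.2 x.2 1) = x.2
        have h2 : gK q w.2 + ((1:ℕ) : ZMod q) * slp q w.2 x.2 1 = gK q x.2 := by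
          simp [slp]
        rw [h2, fK_gK]
    rw [e1]
  · have hgt : x.1.val < w.1.val := by omega
    rw [support_rho_gt hq hgt, show w.1.val - x.1.val = 1 from by omega]
    rw [show List.range 2 = [0, 1] from rfl]
    simp only [List.map_cons, List.map_nil]
    rw [cDown_zero]
    have e1 : cDown w (slp q w.2 x.2 1) 1 = x := by
      refine Prod.ext ?_ ?_
      · apply Fin.ext; simp only [cDown]; omega
      · show fK q (gK q w.2 + ((1:ℕ) : ZMod q) * slp q w.2 x.2 1) = x.2
        have h2 : gK q w.2 + ((1:ℕ) : ZMod q) * slp q w.2 x.2 1 = gK q x.2 := by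
          simp [slp]
        rw [h2, fK_gK]
    rw [e1]

def Good (hq : q.Prime) (c : ℕ → Vtx q) (n : ℕ) : Prop :=
  (∀ a, a ≤ n → ∀ b, b ≤ n → c a = c b → a = b) ∧
  ∀ j k, j + k ≤ n →
    (rho hq (c j) (c (j+k))).support = (List.range (k+1)).map (fun i => c (j+i))

lemma good_refl (hq : q.Prime) (u : Vtx q) : Good hq (fun _ => u) 0 := by
  constructor
  · intro a ha b hb _; omega
  · intro j k hjk
    have hj : j = 0 := by omega
    have hk : k = 0 := by omega
    subst hj; subst hk
    rw [support_rho_refl]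
    simp

lemma good_up [NeZero q] [Fact q.Prime] (hq : q.Prime) (u : Vtx q) (s : ZMod q) (d : ℕ)
    (hdq : u.1.val + d < q) : Good hq (cUp u s) d := by
  constructor
  · exact cUp_inj u s d hdq
  · intro j k hjk
    rcases k with _ | k
    · rw [Nat.add_zero, support_rho_refl]
      simp [List.range_succ]
    · have hw1 : (cUp u s j).1.val = u.1.val + j := by simp only [cUp]; omega
      have hx1 : (cUp u s (j+(k+1))).1.val = u.1.val + (j+(k+1)) := by
        simp only [cUp]; omega
      have hlt' : (cUp u s j).1.val < (cUp u s (j+(k+1))).1.val := by omega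
      rw [support_rho_lt hq hlt']
      rw [show (cUp u s (j+(k+1))).1.val - (cUp u s j).1.val = k+1 from by omega]
      rw [slp_cUp u s j (k+1) (by omega) (by omega)]
      apply List.map_congr_left
      intro a ha
      rw [List.mem_range] at ha
      exact cUp_shift u s j a (by omega)

lemma good_down [NeZero q] [Fact q.Prime] (hq : q.Prime) (u : Vtx q) (s : ZMod q) (d : ℕ)
    (hdu : d ≤ u.1.val) : Good hq (cDown u s) d := by
  constructor
  · exact cDown_inj u s d hdu
  · intro j k hjk
    rcases k with _ | k
    · rw [Nat.add_zero, support_rho_refl]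
      simp [List.range_succ]
    · have hw1 : (cDown u s j).1.val = u.1.val - j := by simp only [cDown]
      have hx1 : (cDown u s (j+(k+1))).1.val = u.1.val - (j+(k+1)) := by simp only [cDown]
      have hgt' : (cDown u s (j+(k+1))).1.val < (cDown u s j).1.val := by omega
      rw [support_rho_gt hq hgt']
      rw [show (cDown u s j).1.val - (cDown u s (j+(k+1))).1.val = k+1 from by omega]
      rw [slp_cDown u s j (k+1) (by omega) (by omega)]
      apply List.map_congr_left
      intro a ha
      rw [List.mem_range] at ha
      exact cDown_shift u s j a

lemma good_eq [NeZero q] [Fact q.Prime] (hq : q.Prime) {u v : Vtx q} (huv : u ≠ v)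
    (hl : v.1.val = u.1.val) : Good hq (cEq u v) 2 := by
  have hq1 := hq.one_lt
  have hu1 := u.1.isLt
  have cEq_one : cEq u v 1 = midV u := rfl
  have hmid : (midV u).1.val + 1 = u.1.val ∨ u.1.val + 1 = (midV u).1.val := by
    simp only [midV]
    split_ifs with h
    · right; simp
    · left; show (u.1.val - 1) + 1 = u.1.val; omega
  constructor
  · exact cEq_inj hq1 huv hl
  · intro j k hjk
    rcases k with _ | k
    · rw [Nat.add_zero, support_rho_refl]
      simp [List.range_succ]
    rcases k with _ | k
    · -- adjacent step, j = 0 or 1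
      have hj1 : j ≤ 1 := by omega
      interval_cases j
      · have hstep : ((cEq u v 0).1.val + 1 = (cEq u v (0+1)).1.val ∨
            (cEq u v (0+1)).1.val + 1 = (cEq u v 0).1.val) := by
          rw [cEq_zero, show cEq u v (0+1) = midV u from rfl]
          tauto
        rw [support_rho_adj hq hstep]
        rfl
      · have hstep : ((cEq u v 1).1.val + 1 = (cEq u v (1+1)).1.val ∨
            (cEq u v (1+1)).1.val + 1 = (cEq u v 1).1.val) := by
          rw [cEq_one, show cEq u v (1+1) = v from rfl]
          omega
        rw [support_rho_adj hq hstep]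
        rfl
    · -- k ≥ 2 : must be j = 0, k = 2 : the whole walk
      have hj : j = 0 := by omega
      have hk : k = 0 := by omega
      subst hj; subst hk
      rw [support_rho_eqlayer hq (u := cEq u v 0) (v := cEq u v (0+(0+1+1)))
        (show cEq u v 0 ≠ cEq u v (0+(0+1+1)) from huv) hl]
      apply List.map_congr_left
      intro a ha
      rw [List.mem_range] at ha
      interval_cases a <;> rfl

section Generic
variable {V : Type*} {G : SimpleGraph V} [DecidableEq V]

lemma takeUntil_congr {u v x : V} {p p' : G.Walk u v} (hpp : p = p') (hx : x ∈ p.support) :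
    p.takeUntil x hx = p'.takeUntil x (hpp ▸ hx) := by subst hpp; rfl

lemma dropUntil_congr {u v x : V} {p p' : G.Walk u v} (hpp : p = p') (hx : x ∈ p.support) :
    p.dropUntil x hx = p'.dropUntil x (hpp ▸ hx) := by subst hpp; rfl

lemma support_takeUntil_mkWalk' (c : ℕ → V) (n : ℕ) (h) (x : V) (j : ℕ) (hj : j ≤ n)
    (hxj : c j = x)
    (hinj : ∀ a, a ≤ n → ∀ b, b ≤ n → c a = c b → a = b)
    (hm : x ∈ (mkWalk G c n h).support) :
    ((mkWalk G c n h).takeUntil x hm).support = (List.range (j+1)).map c := by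
  subst hxj
  exact support_takeUntil_mkWalk c n h j hj hinj hm

end Generic

lemma rho_spec (hq : q.Prime) (u v : Vtx q) :
    ∃ (c : ℕ → Vtx q) (n : ℕ) (h : ∀ i, i < n → (layeredGraph q q).Adj (c i) (c (i+1)))
      (h0 : c 0 = u) (hn : c n = v),
      rho hq u v = (mkWalk (layeredGraph q q) c n h).copy h0 hn ∧ Good hq c n := by
  haveI : NeZero q := ⟨hq.pos.ne'⟩
  haveI : Fact q.Prime := ⟨hq⟩
  by_cases huv : u = v
  · subst huv
    refine ⟨fun _ => u, 0, fun i hi => absurd hi (by omega), rfl, rfl, ?_, good_refl hq u⟩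
    rw [rho, dif_pos rfl]
    rfl
  · rcases lt_trichotomy u.1.val v.1.val with hlt | heq | hgt
    · refine ⟨cUp u (slp q u.2 v.2 (v.1.val - u.1.val)), v.1.val - u.1.val,
        adjUp hlt _, cUp_zero u _, cUp_last hlt, ?_,
        good_up hq u _ _ (by have := v.1.isLt; omega)⟩
      rw [rho, dif_neg huv, dif_pos hlt]
    · have hnlt : ¬ u.1.val < v.1.val := by omega
      have hngt : ¬ v.1.val < u.1.val := by omega
      refine ⟨cEq u v, 2, adjEq hq.one_lt heq.symm, cEq_zero u v, cEq_two u v, ?_,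
        good_eq hq huv heq.symm⟩
      rw [rho, dif_neg huv, dif_neg hnlt, dif_neg hngt]
    · have hnlt : ¬ u.1.val < v.1.val := by omega
      refine ⟨cDown u (slp q u.2 v.2 (u.1.val - v.1.val)), u.1.val - v.1.val,
        adjDown hgt _, cDown_zero u _, cDown_last hgt, ?_,
        good_down hq u _ _ (by omega)⟩
      rw [rho, dif_neg huv, dif_neg hnlt, dif_pos hgt]

lemma rho_consistent (hq : q.Prime) : IsConsistentScheme (rho hq) := by
  intro u v w hw x hx
  obtain ⟨c, n, h, h0, hn, heq, hinj, hgood⟩ := rho_spec hq u v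
  have hw2 : w ∈ (mkWalk (layeredGraph q q) c n h).support := by
    have h2 := hw; rw [heq, Walk.support_copy] at h2; exact h2
  obtain ⟨j, hj, hcj⟩ := mem_support_mkWalk.mp hw2
  subst hcj
  have e1 := dropUntil_congr heq hw
  rw [Walk.dropUntil_copy] at e1
  rw [dropUntil_mkWalk_eq c n h j hj hinj] at e1
  rw [Walk.copy_copy] at e1
  have hx2 : x ∈ (mkWalk (layeredGraph q q) (fun i => c (j+i)) (n-j)
      (fun i hi => h (j+i) (by omega))).support := by
    have h2 := hx; rw [e1, Walk.support_copy] at h2; exact h2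
  obtain ⟨k, hk, hck⟩ := mem_support_mkWalk.mp hx2
  change c (j+k) = x at hck
  subst hck
  rw [takeUntil_congr e1 hx]
  rw [Walk.takeUntil_copy]
  rw [Walk.copy_rfl_rfl]
  apply eq_of_support_eq
  rw [support_takeUntil_mkWalk' (fun i => c (j+i)) (n-j) (fun i hi => h (j+i) (by omega))
      (c (j+k)) k hk rfl
      (fun a ha b hb hab => by
        have := hinj (j+a) (by omega) (j+b) (by omega) hab
        omega) _]
  rw [hgood j k (by omega)]

lemma edges_rho_lt [NeZero q] (hq : q.Prime) {u v : Vtx q} (hlt : u.1.val < v.1.val) :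
    (rho hq u v).edges = (List.range (v.1.val - u.1.val)).map
      (fun i => s(cUp u (slp q u.2 v.2 (v.1.val - u.1.val)) i,
                  cUp u (slp q u.2 v.2 (v.1.val - u.1.val)) (i+1))) := by
  have huv : u ≠ v := fun h => by subst h; omega
  rw [rho, dif_neg huv, dif_pos hlt, Walk.edges_copy, edges_mkWalk]

lemma pair_eq_of_edge_eq [NeZero q] [Fact q.Prime] (hq : q.Prime)
    {p p' : Vtx q × Vtx q}
    (h1 : p.1.1.val = 0) (h2 : p.2.1.val = q - 1)
    (h1' : p'.1.1.val = 0) (h2' : p'.2.1.val = q - 1)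
    {i i' : ℕ} (hi : i < q - 1) (hi' : i' < q - 1)
    (he : s(cUp p.1 (slp q p.1.2 p.2.2 (p.2.1.val - p.1.1.val)) i,
            cUp p.1 (slp q p.1.2 p.2.2 (p.2.1.val - p.1.1.val)) (i+1))
        = s(cUp p'.1 (slp q p'.1.2 p'.2.2 (p'.2.1.val - p'.1.1.val)) i',
            cUp p'.1 (slp q p'.1.2 p'.2.2 (p'.2.1.val - p'.1.1.val)) (i'+1))) :
    p = p' := by
  have hq2 := hq.two_le
  rw [Sym2.eq_iff] at he
  rcases he with ⟨hA, hB⟩ | ⟨hA, hB⟩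
  · have hii : i = i' := by
      have := congrArg (fun z : Vtx q => z.1.val) hA
      simp only [cUp] at this
      omega
    subst hii
    have E1 : gK q p.1.2 + (i : ZMod q) * slp q p.1.2 p.2.2 (p.2.1.val - p.1.1.val)
        = gK q p'.1.2 + (i : ZMod q) * slp q p'.1.2 p'.2.2 (p'.2.1.val - p'.1.1.val) := by
      apply fK_inj
      have := congrArg Prod.snd hA
      simpa [cUp] using this
    have E2 : gK q p.1.2 + ((i+1 : ℕ) : ZMod q) * slp q p.1.2 p.2.2 (p.2.1.val - p.1.1.val)
        = gK q p'.1.2 + ((i+1 : ℕ) : ZMod q) * slp q p'.1.2 p'.2.2 (p'.2.1.val - p'.1.1.val) := by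
      apply fK_inj
      have := congrArg Prod.snd hB
      simpa [cUp] using this
    push_cast at E2
    have hs : slp q p.1.2 p.2.2 (p.2.1.val - p.1.1.val)
        = slp q p'.1.2 p'.2.2 (p'.2.1.val - p'.1.1.val) := by
      linear_combination E2 - E1
    have ha : gK q p.1.2 = gK q p'.1.2 := by
      linear_combination E1 - (i : ZMod q) * hs
    have hd : p.2.1.val - p.1.1.val = q - 1 := by omega
    have hd' : p'.2.1.val - p'.1.1.val = q - 1 := by omega
    rw [hd, hd', slp, slp] at hs
    have hcast : ((q - 1 : ℕ) : ZMod q) ≠ 0 := natCast_ne_zero_of (by omega) (by omega)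
    have hb : gK q p.2.2 = gK q p'.2.2 := by
      have h5 := mul_right_cancel₀ (inv_ne_zero hcast) hs
      linear_combination h5 + ha
    have e1 : p.1 = p'.1 := Prod.ext (Fin.ext (by omega)) (gK_inj ha)
    have e2 : p.2 = p'.2 := Prod.ext (Fin.ext (by omega)) (gK_inj hb)
    exact Prod.ext e1 e2
  · exfalso
    have hA1 := congrArg (fun z : Vtx q => z.1.val) hA
    have hB1 := congrArg (fun z : Vtx q => z.1.val) hB
    simp only [cUp] at hA1 hB1
    omega
end Rho
end ConsLB

/-- **Tightness of the `n^(1/2)|P|` bound for consistent tiebreaking schemes.**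
For every prime `q`, in the complete layered graph on `n = q²` vertices having `q` layers
of `q` vertices each, for every pair set `P` whose pairs each consist of a vertex of the
first layer and a vertex of the last layer, there is a consistent shortest-path tiebreaking
scheme `ρ` whose paths on `P` are pairwise edge-disjoint; consequently the union
`⋃_{p ∈ P} ρ p` contains exactly `|P| · (q - 1) = n^(1/2)·|P| - |P|` edges. -/
theorem consistent_lower_bound_sqrt (q : ℕ) (hq : q.Prime)
    (P : Finset ((Fin q × Fin q) × (Fin q × Fin q)))
    (hP : ∀ p ∈ P, p.1.1.val = 0 ∧ p.2.1.val = q - 1) :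
    ∃ ρ : ∀ u v : Fin q × Fin q, (layeredGraph q q).Walk u v,
      IsShortestPathScheme ρ ∧
      IsConsistentScheme ρ ∧
      (∀ p ∈ P, ∀ p' ∈ P, p ≠ p' →
        List.Disjoint (ρ p.1 p.2).edges (ρ p'.1 p'.2).edges) ∧
      (P.biUnion (fun p => (ρ p.1 p.2).edges.toFinset)).card = P.card * (q - 1) := by
  haveI : NeZero q := ⟨hq.pos.ne'⟩
  haveI : Fact q.Prime := ⟨hq⟩
  have hq2 := hq.two_le
  have hdisj : ∀ p ∈ P, ∀ p' ∈ P, p ≠ p' →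
      List.Disjoint (ConsLB.rho hq p.1 p.2).edges (ConsLB.rho hq p'.1 p'.2).edges := by
    intro p hp p' hp' hne
    obtain ⟨hp1, hp2⟩ := hP p hp
    obtain ⟨hp1', hp2'⟩ := hP p' hp'
    have hlt : p.1.1.val < p.2.1.val := by omega
    have hlt' : p'.1.1.val < p'.2.1.val := by omega
    rw [ConsLB.edges_rho_lt hq hlt, ConsLB.edges_rho_lt hq hlt']
    intro e he he'
    rw [List.mem_map] at he he'
    obtain ⟨i, hi, rfl⟩ := he
    obtain ⟨i', hi', heq2⟩ := he'
    rw [List.mem_range] at hi hi'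
    exact hne (ConsLB.pair_eq_of_edge_eq hq hp1 hp2 hp1' hp2'
      (by omega) (by omega) heq2.symm)
  refine ⟨ConsLB.rho hq, ?_, ConsLB.rho_consistent hq, hdisj, ?_⟩
  · intro u v
    exact ⟨ConsLB.rho_isPath hq u v, ConsLB.rho_length_eq_dist hq u v⟩
  · rw [Finset.card_biUnion]
    · have hcard : ∀ p ∈ P, (ConsLB.rho hq p.1 p.2).edges.toFinset.card = q - 1 := by
        intro p hp
        obtain ⟨hp1, hp2⟩ := hP p hp
        have hlt : p.1.1.val < p.2.1.val := by omega
        rw [List.toFinset_card_of_nodup (ConsLB.rho_isPath hq p.1 p.2).isTrail.edges_nodup]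
        rw [Walk.length_edges, ConsLB.length_rho_lt hq hlt]
        omega
      rw [Finset.sum_congr rfl hcard, Finset.sum_const, smul_eq_mul]
    · intro x hx y hy hxy
      refine Finset.disjoint_left.mpr (fun a ha ha' => ?_)
      exact hdisj x hx y hy hxy (List.mem_toFinset.mp ha) (List.mem_toFinset.mp ha')
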